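/- Let L₁, L₂ > 0, let q₁, q₂ : ℝ → ℝ be continuous with qᵢ Lᵢ-periodic, and let λ₁ ≤ 0 and λ₂ < 0. Suppose φ₁ : ℝ → ℝ is C², L₁-periodic, strictly positive, with φ₁'' + q₁φ₁ + λ₁φ₁ = 0, and φ₂ : ℝ → ℝ is C², L₂-periodic, not identically zero, with φ₂'' + q₂φ₂ + λ₂φ₂ = 0. Then there exist C² functions u₁, u₂ : ℝ → ℝ with uᵢ Lᵢ-periodic, not both identically zero, such that ∫₀^{L₁} u₁ + ∫₀^{L₂} u₂ = 0 and ∫₀^{L₁}(u₁'² − q₁u₁²) + ∫₀^{L₂}(u₂'² − q₂u₂²) < 0. -/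

import Mathlib

open MeasureTheory intervalIntegral

private lemma periodic_deriv' {L : ℝ} {φ : ℝ → ℝ} (h : Function.Periodic φ L)
    (hd : Differentiable ℝ φ) : Function.Periodic (deriv φ) L := by
  intro x
  have hfun : (fun y => φ (y + L)) = φ := funext fun y => h y
  calc deriv φ (x + L) = deriv (fun y => φ (y + L)) x := (deriv_comp_add_const φ L x).symm
    _ = deriv φ x := by rw [hfun]

/-- Positivity of the square integral of a nontrivial periodic continuous function. -/
private lemma sq_integral_pos {L : ℝ} (hL : 0 < L) {φ : ℝ → ℝ} (hc : Continuous φ)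
    (hp : Function.Periodic φ L) (hne : ∃ s, φ s ≠ 0) :
    0 < ∫ s in (0:ℝ)..L, (φ s) ^ 2 := by
  obtain ⟨s₀, hs₀⟩ := hne
  obtain ⟨y, hy, hyval⟩ := hp.exists_mem_Ico₀ hL s₀
  have hyne : φ y ≠ 0 := hyval ▸ hs₀
  -- find an open interval inside (0, L] where φ ≠ 0
  have hcont : ContinuousAt φ y := hc.continuousAt
  have hnhds : ∀ᶠ x in nhds y, φ x ≠ 0 := hcont.eventually_ne hyne
  obtain ⟨ε, hε, hball⟩ := Metric.eventually_nhds_iff.mp hnhds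
  set b := min (y + ε) L with hb
  have hyb : y < b := lt_min (by linarith) hy.2
  have hsub : Set.Ioo y b ⊆ (Function.support fun s => (φ s) ^ 2) ∩ Set.Ioc 0 L := by
    intro x hx
    constructor
    · have : φ x ≠ 0 := by
        apply hball
        rw [Real.dist_eq, abs_lt]
        constructor
        · have := hx.1; linarith
        · have := hx.2; have : x < y + ε := lt_of_lt_of_le hx.2 (min_le_left _ _); linarith
      simp [Function.mem_support, pow_eq_zero_iff, this]
    · exact ⟨lt_of_le_of_lt hy.1 hx.1, le_of_lt (lt_of_lt_of_le hx.2 (min_le_right _ _))⟩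
  have hint : IntervalIntegrable (fun s => (φ s) ^ 2) volume 0 L :=
    (hc.pow 2).intervalIntegrable 0 L
  rw [integral_pos_iff_support_of_nonneg_ae (Filter.Eventually.of_forall fun x => sq_nonneg _) hint]
  refine ⟨hL, ?_⟩
  calc (0 : ENNReal) < volume (Set.Ioo y b) := by
        rw [Real.volume_Ioo]; simp [hyb]
    _ ≤ volume ((Function.support fun s => (φ s) ^ 2) ∩ Set.Ioc 0 L) :=
        measure_mono hsub

/-- The index form of an eigenfunction over one period equals `lam` times the L² norm. -/
private lemma index_eigen {L lam : ℝ} {q φ : ℝ → ℝ} (hq : Continuous q)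
    (hφ : ContDiff ℝ 2 φ) (hφp : Function.Periodic φ L)
    (hφeq : ∀ s, deriv (deriv φ) s + q s * φ s + lam * φ s = 0) :
    (∫ s in (0:ℝ)..L, ((deriv φ s) ^ 2 - q s * (φ s) ^ 2))
      = lam * ∫ s in (0:ℝ)..L, (φ s) ^ 2 := by
  have hφd : Differentiable ℝ φ := hφ.differentiable (by norm_num)
  have hφ' : ContDiff ℝ 1 (deriv φ) := by
    have h2 : ContDiff ℝ (1 + 1 : ℕ) φ := by norm_num at hφ ⊢; exact hφ
    exact ((contDiff_succ_iff_deriv (n := 1)).mp (by exact_mod_cast h2)).2.2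
  have hφ'c : Continuous (deriv φ) := hφ'.continuous
  have hφ'd : Differentiable ℝ (deriv φ) := hφ'.differentiable one_ne_zero
  set g : ℝ → ℝ := fun s => φ s * deriv φ s with hg
  have hgderiv : ∀ s, HasDerivAt g ((deriv φ s) ^ 2 - q s * (φ s) ^ 2 - lam * (φ s) ^ 2) s := by
    intro s
    have h1 : HasDerivAt φ (deriv φ s) s := (hφd s).hasDerivAt
    have h2 : HasDerivAt (deriv φ) (deriv (deriv φ) s) s := (hφ'd s).hasDerivAt
    have := h1.mul h2
    have heq : deriv φ s * deriv φ s + φ s * deriv (deriv φ) s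
        = (deriv φ s) ^ 2 - q s * (φ s) ^ 2 - lam * (φ s) ^ 2 := by
      have h3 := hφeq s
      have : deriv (deriv φ) s = -(q s * φ s) - lam * φ s := by linarith
      rw [this]; ring
    exact heq ▸ this
  have hker : ∀ s, (deriv φ s) ^ 2 - q s * (φ s) ^ 2
      = deriv g s + lam * (φ s) ^ 2 := by
    intro s
    rw [(hgderiv s).deriv]; ring
  have hgcont : Continuous (deriv g) := by
    have : deriv g = fun s => (deriv φ s) ^ 2 - q s * (φ s) ^ 2 - lam * (φ s) ^ 2 :=
      funext fun s => (hgderiv s).deriv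
    rw [this]
    exact ((hφ'c.pow 2).sub (hq.mul ((hφd.continuous).pow 2))).sub
      (continuous_const.mul ((hφd.continuous).pow 2))
  have hint1 : IntervalIntegrable (deriv g) volume 0 L := hgcont.intervalIntegrable 0 L
  have hint2 : IntervalIntegrable (fun s => lam * (φ s) ^ 2) volume 0 L :=
    (continuous_const.mul ((hφd.continuous).pow 2)).intervalIntegrable 0 L
  calc (∫ s in (0:ℝ)..L, ((deriv φ s) ^ 2 - q s * (φ s) ^ 2))
      = ∫ s in (0:ℝ)..L, (deriv g s + lam * (φ s) ^ 2) := by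
        apply intervalIntegral.integral_congr
        intro s _; exact hker s
    _ = (∫ s in (0:ℝ)..L, deriv g s) + ∫ s in (0:ℝ)..L, lam * (φ s) ^ 2 :=
        intervalIntegral.integral_add hint1 hint2
    _ = (g L - g 0) + lam * ∫ s in (0:ℝ)..L, (φ s) ^ 2 := by
        rw [intervalIntegral.integral_deriv_eq_sub (fun x _ => (hgderiv x).differentiableAt)
          hint1, intervalIntegral.integral_const_mul]
    _ = lam * ∫ s in (0:ℝ)..L, (φ s) ^ 2 := by
        have hgp : g L = g 0 := by
          have h1 : φ L = φ 0 := by simpa using hφp 0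
          have h2 : deriv φ L = deriv φ 0 := by
            simpa using periodic_deriv' hφp hφd 0
          simp [hg, h1, h2]
        rw [hgp]; ring

/-- The gluing argument of the Main Theorem: if the Jacobi operator on one
boundary component has a positive eigenfunction with eigenvalue `λ₁ ≤ 0`, and
on the other a nontrivial eigenfunction with eigenvalue `λ₂ < 0`, then there
is a pair of periodic functions with total mean zero making the index form
negative (so the union of the two curves is unstable). -/
theorem stmt_17 (L₁ L₂ : ℝ) (hL₁ : 0 < L₁) (hL₂ : 0 < L₂)
    (q₁ q₂ : ℝ → ℝ) (hq₁ : Continuous q₁) (hq₂ : Continuous q₂)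
    (hq₁p : Function.Periodic q₁ L₁) (hq₂p : Function.Periodic q₂ L₂)
    (lam₁ lam₂ : ℝ) (hlam₁ : lam₁ ≤ 0) (hlam₂ : lam₂ < 0)
    (φ₁ : ℝ → ℝ) (hφ₁ : ContDiff ℝ 2 φ₁) (hφ₁p : Function.Periodic φ₁ L₁)
    (hφ₁pos : ∀ s, 0 < φ₁ s)
    (hφ₁eq : ∀ s, deriv (deriv φ₁) s + q₁ s * φ₁ s + lam₁ * φ₁ s = 0)
    (φ₂ : ℝ → ℝ) (hφ₂ : ContDiff ℝ 2 φ₂) (hφ₂p : Function.Periodic φ₂ L₂)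
    (hφ₂ne : ∃ s, φ₂ s ≠ 0)
    (hφ₂eq : ∀ s, deriv (deriv φ₂) s + q₂ s * φ₂ s + lam₂ * φ₂ s = 0) :
    ∃ u₁ u₂ : ℝ → ℝ, ContDiff ℝ 2 u₁ ∧ ContDiff ℝ 2 u₂ ∧
      Function.Periodic u₁ L₁ ∧ Function.Periodic u₂ L₂ ∧
      ((∃ s, u₁ s ≠ 0) ∨ (∃ s, u₂ s ≠ 0)) ∧
      (∫ s in (0:ℝ)..L₁, u₁ s) + (∫ s in (0:ℝ)..L₂, u₂ s) = 0 ∧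
      (∫ s in (0:ℝ)..L₁, ((deriv u₁ s) ^ 2 - q₁ s * (u₁ s) ^ 2)) +
        (∫ s in (0:ℝ)..L₂, ((deriv u₂ s) ^ 2 - q₂ s * (u₂ s) ^ 2)) < 0 := by
  have hφ₁d : Differentiable ℝ φ₁ := hφ₁.differentiable (by norm_num)
  have hφ₁c : Continuous φ₁ := hφ₁d.continuous
  -- ∫ φ₁ over [0, L₁] is positive
  have hI₁pos : 0 < ∫ s in (0:ℝ)..L₁, φ₁ s :=
    intervalIntegral_pos_of_pos (hφ₁c.intervalIntegrable 0 L₁) hφ₁pos hL₁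
  set A := ∫ s in (0:ℝ)..L₂, φ₂ s with hA
  set c : ℝ := -A / (∫ s in (0:ℝ)..L₁, φ₁ s) with hc
  refine ⟨fun s => c * φ₁ s, φ₂, hφ₁.const_smul c, hφ₂, fun x => by simp [hφ₁p x],
    hφ₂p, Or.inr hφ₂ne, ?_, ?_⟩
  · rw [intervalIntegral.integral_const_mul, hc]
    field_simp
    linarith [hA]
  · have hderiv : (deriv fun s => c * φ₁ s) = fun s => c * deriv φ₁ s := by
      funext s
      exact deriv_const_mul c (hφ₁d s)
    have heq1 : (∫ s in (0:ℝ)..L₁, ((deriv fun s => c * φ₁ s) s ^ 2 - q₁ s * (c * φ₁ s) ^ 2))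
        = c ^ 2 * ∫ s in (0:ℝ)..L₁, ((deriv φ₁ s) ^ 2 - q₁ s * (φ₁ s) ^ 2) := by
      rw [hderiv, ← intervalIntegral.integral_const_mul]
      apply intervalIntegral.integral_congr
      intro s _; ring
    rw [heq1, index_eigen hq₁ hφ₁ hφ₁p hφ₁eq, index_eigen hq₂ hφ₂ hφ₂p hφ₂eq]
    have h1 : c ^ 2 * (lam₁ * ∫ s in (0:ℝ)..L₁, (φ₁ s) ^ 2) ≤ 0 := by
      have hsq : 0 ≤ ∫ s in (0:ℝ)..L₁, (φ₁ s) ^ 2 :=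
        intervalIntegral.integral_nonneg (le_of_lt hL₁) fun s _ => sq_nonneg _
      have : lam₁ * ∫ s in (0:ℝ)..L₁, (φ₁ s) ^ 2 ≤ 0 := mul_nonpos_of_nonpos_of_nonneg hlam₁ hsq
      exact mul_nonpos_of_nonneg_of_nonpos (sq_nonneg c) this
    have h2 : lam₂ * (∫ s in (0:ℝ)..L₂, (φ₂ s) ^ 2) < 0 :=
      mul_neg_of_neg_of_pos hlam₂ (sq_integral_pos hL₂ (hφ₂.continuous) hφ₂p hφ₂ne)
    linarith
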